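/- Let q be a primitive ℓ-th root of unity with ℓ > 1 odd. Then in D_q(C^N), for each i = 0,1,...,N, the identity β_i^ℓ = 1 + Σ_{j=1}^{i} x_j^ℓ ∂_j^ℓ holds (note: the index runs over all j ≤ i). -/

import Mathlib

open Finset in
lemma scalar_prod (ζ : ℂ) (n : ℕ) (hn : 1 < n) (hodd : Odd n) (hζ : IsPrimitiveRoot ζ n)
    (s t : ℂ) : ∏ j ∈ Finset.range n, (ζ ^ j * s - t) = s ^ n - t ^ n := by
  have hpos : 0 < n := by omega
  have hζ0 : ζ ≠ 0 := hζ.ne_zero (by omega)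
  have hinv : IsPrimitiveRoot ζ⁻¹ n := hζ.inv
  have h1 : ∀ j, ζ ^ j * s - t = ζ ^ j * (s - ζ⁻¹ ^ j * t) := by
    intro j
    rw [mul_sub, ← mul_assoc, ← mul_pow, mul_inv_cancel₀ hζ0, one_pow, one_mul]
  have h2 : ∏ j ∈ range n, (ζ:ℂ) ^ j = 1 := by
    rw [Finset.prod_pow_eq_pow_sum, Finset.sum_range_id]
    obtain ⟨m, hm⟩ := hodd
    have h1 : n - 1 = 2 * m := by omega
    rw [h1, show n * (2 * m) = n * m * 2 by ring, Nat.mul_div_cancel _ two_pos,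
      pow_mul, hζ.pow_eq_one, one_pow]
  have h3 : ∏ j ∈ range n, (s - ζ⁻¹ ^ j * t) = ∏ μ ∈ Polynomial.nthRootsFinset n (1 : ℂ), (s - μ * t) := by
    apply Finset.prod_bij (fun j _ => ζ⁻¹ ^ j)
    · intro j hj
      exact (Polynomial.mem_nthRootsFinset hpos (1 : ℂ)).2 (by rw [← pow_mul, mul_comm, pow_mul, hinv.pow_eq_one, one_pow])
    · intro j hj k hk h
      exact hinv.pow_inj (mem_range.1 hj) (mem_range.1 hk) h
    · intro μ hμ
      haveI : NeZero n := ⟨by omega⟩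
      obtain ⟨i, hik, rfl⟩ := hinv.eq_pow_of_pow_eq_one ((Polynomial.mem_nthRootsFinset hpos (1 : ℂ)).1 hμ)
      exact ⟨i, mem_range.2 hik, rfl⟩
    · intro j hj; rfl
  calc ∏ j ∈ range n, (ζ ^ j * s - t)
      = ∏ j ∈ range n, (ζ ^ j * (s - ζ⁻¹ ^ j * t)) := by simp_rw [h1]
    _ = (∏ j ∈ range n, (ζ:ℂ) ^ j) * ∏ j ∈ range n, (s - ζ⁻¹ ^ j * t) := by rw [Finset.prod_mul_distrib]
    _ = ∏ μ ∈ Polynomial.nthRootsFinset n (1 : ℂ), (s - μ * t) := by rw [h2, h3, one_mul]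
    _ = s ^ n - t ^ n := (IsPrimitiveRoot.pow_sub_pow_eq_prod_sub_mul s t hpos hζ).symm

open Finset MvPolynomial in
lemma comm_prod {B : Type*} [CommRing B] [Algebra ℂ B] (ζ : ℂ) (n : ℕ) (hn : 1 < n)
    (hodd : Odd n) (hζ : IsPrimitiveRoot ζ n) (v c : B) :
    ∏ j ∈ Finset.range n, (ζ ^ j • v - c) = v ^ n - c ^ n := by
  have hP : (∏ j ∈ range n, (C (ζ ^ j) * X 0 - X 1) : MvPolynomial (Fin 2) ℂ)
      = X 0 ^ n - X 1 ^ n := by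
    apply MvPolynomial.funext
    intro z
    rw [map_prod, map_sub, map_pow, map_pow, eval_X, eval_X]
    simp only [map_sub, map_mul, eval_C, eval_X]
    exact scalar_prod ζ n hn hodd hζ (z 0) (z 1)
  have := congrArg (aeval (R := ℂ) ![v, c]) hP
  rw [map_prod, map_sub, map_pow, map_pow, aeval_X, aeval_X] at this
  simp only [map_sub, map_mul, aeval_C, aeval_X, Matrix.cons_val_zero, Matrix.cons_val_one,
    Matrix.head_cons] at this
  convert this using 2 with j hj
  rw [Algebra.smul_def]

open Finset Polynomial in
lemma key_step {A : Type*} [Ring A] [Algebra ℂ A] (q : ℂ) (n : ℕ) (hn : 1 < n)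
    (hodd : Odd n) (hq : IsPrimitiveRoot q n) (a b c : A)
    (hca : Commute c a) (hcb : Commute c b)
    (hba : b * a = (q ^ 2) • (a * b) + (q ^ 2 - 1) • c) :
    (c + a * b) ^ n = c ^ n + a ^ n * b ^ n := by
  have hq0 : q ≠ 0 := hq.ne_zero (by omega)
  have hQ0 : q ^ 2 ≠ 0 := pow_ne_zero 2 hq0
  have hQ : IsPrimitiveRoot (q ^ 2) n := by
    refine hq.pow_of_coprime 2 (Nat.prime_two.coprime_iff_not_dvd.2 ?_)
    rintro ⟨k, rfl⟩
    have := Nat.odd_iff.1 hodd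
    omega
  set v := c + a * b with hv
  have hζ : IsPrimitiveRoot (q ^ 2)⁻¹ n := hQ.inv
  set ζ := (q ^ 2)⁻¹ with hζdef
  have hva : v * a = (q ^ 2) • (a * v) := by
    rw [hv, add_mul, mul_assoc, hba, hca.eq]
    simp only [mul_add, mul_smul_comm, smul_add]
    module
  have hbv : b * v = (q ^ 2) • (v * b) := by
    rw [hv, mul_add, ← mul_assoc, hba, ← hcb.eq]
    simp only [add_mul, smul_mul_assoc, smul_add, mul_assoc]
    module
  have hcv : Commute c v := by
    have : Commute c (a * b) := hca.mul_right hcb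
    rw [hv]
    exact (Commute.refl c).add_right this
  have hvak : ∀ k : ℕ, v * a ^ k = ((q ^ 2) ^ k) • (a ^ k * v) := by
    intro k
    induction k with
    | zero => simp
    | succ k ih =>
      rw [pow_succ' a, ← mul_assoc, hva, smul_mul_assoc, mul_assoc, ih, mul_smul_comm,
        smul_smul, ← mul_assoc, ← pow_succ']
  have hakv : ∀ k : ℕ, a ^ k * v = (ζ ^ k) • (v * a ^ k) := by
    intro k
    rw [hvak k, smul_smul, hζdef, ← mul_pow, inv_mul_cancel₀ hQ0, one_pow, one_smul]
  -- the evaluation homomorphism from the commutative ring ℂ[X][Y], X ↦ c, Y ↦ v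
  have hf : ∀ r : ℂ[X], Commute ((aeval c) r) v := by
    intro r
    induction r using Polynomial.induction_on' with
    | add p1 p2 h1 h2 => rw [map_add]; exact h1.add_left h2
    | monomial m r =>
      rw [aeval_monomial]
      exact (Algebra.commute_algebraMap_left r v).mul_left (hcv.pow_left m)
  set φ : Polynomial (Polynomial ℂ) →ₐ[ℂ] A := eval₂AlgHom (aeval c) v hf with hφ
  have hφY : φ Polynomial.X = v := by simp [hφ]
  have hφCX : φ (Polynomial.C Polynomial.X) = c := by simp [hφ]
  have hφf : ∀ j : ℕ, φ (ζ ^ j • Polynomial.X - Polynomial.C Polynomial.X) = ζ ^ j • v - c := by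
    intro j
    rw [map_sub, map_smul, hφY, hφCX]
  have hu : ∀ k : ℕ,
      a ^ k * b ^ k = φ (∏ j ∈ range k, (ζ ^ j • Polynomial.X - Polynomial.C Polynomial.X)) := by
    intro k
    induction k with
    | zero =>
      rw [pow_zero, pow_zero, one_mul, Finset.prod_range_zero, map_one]
    | succ k ih =>
      have h2 : a * b = v - c := by rw [hv]; abel
      have h3 : a ^ k * c = c * a ^ k := ((hca.pow_right k).eq).symm
      have hstep : a ^ (k + 1) * b ^ (k + 1) = (ζ ^ k • v - c) * (a ^ k * b ^ k) :=
        calc a ^ (k + 1) * b ^ (k + 1) = a ^ k * (v - c) * b ^ k := by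
              rw [pow_succ a, pow_succ' b, ← h2]; noncomm_ring
          _ = (ζ ^ k • (v * a ^ k) - c * a ^ k) * b ^ k := by rw [mul_sub, hakv k, h3]
          _ = (ζ ^ k • v - c) * (a ^ k * b ^ k) := by
              rw [sub_mul, sub_mul, smul_mul_assoc, smul_mul_assoc, mul_assoc, mul_assoc]
      rw [hstep, ih, Finset.prod_range_succ, mul_comm, map_mul, hφf k]
  have hfin : a ^ n * b ^ n = v ^ n - c ^ n := by
    rw [hu n, comm_prod ζ n hn hodd hζ _ _, map_sub, map_pow, map_pow, hφY, hφCX]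
  rw [hfin]
  abel

/-- at a primitive ℓ-th root of unity (ℓ > 1 odd),
β_i^ℓ = 1 + ∑_{j ≤ i} x_j^ℓ ∂_j^ℓ. -/
theorem stmt_5 (q : ℂ) (l : ℕ) (hl : 1 < l) (hodd : Odd l) (hq : IsPrimitiveRoot q l) (N : ℕ)
    (A : Type) [Ring A] [Algebra ℂ A]
    (x p : Fin N → A)
    (hxx : ∀ i j : Fin N, i < j → x j * x i = q • (x i * x j))
    (hpp : ∀ i j : Fin N, i < j → p j * p i = q⁻¹ • (p i * p j))
    (hpx : ∀ i j : Fin N, j ≠ i → p j * x i = q • (x i * p j))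
    (β : ℕ → A)
    (hβ : ∀ m : ℕ, β m =
      1 + ∑ j ∈ Finset.univ.filter (fun j : Fin N => (j : ℕ) < m), x j * p j)
    (hpxi : ∀ i : Fin N, p i * x i = q ^ 2 • (x i * p i) + (q ^ 2 - 1) • β (i : ℕ)) :
    ∀ i : ℕ, i ≤ N →
      β i ^ l =
        1 + ∑ j ∈ Finset.univ.filter (fun j : Fin N => (j : ℕ) < i), x j ^ l * p j ^ l := by
  have hq0 : q ≠ 0 := hq.ne_zero (by omega)
  intro i
  induction i with
  | zero =>
    intro _
    have h0 : β 0 = 1 := by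
      rw [hβ 0]
      simp
    rw [h0]
    simp
  | succ i IH =>
    intro hiN
    have hiN' : i < N := hiN
    have hIH := IH (by omega)
    set ι : Fin N := ⟨i, hiN'⟩ with hι
    have hfilter : ∀ (f : Fin N → A), ∑ j ∈ Finset.univ.filter (fun j : Fin N => (j : ℕ) < i + 1), f j
        = f ι + ∑ j ∈ Finset.univ.filter (fun j : Fin N => (j : ℕ) < i), f j := by
      intro f
      have hset : Finset.univ.filter (fun j : Fin N => (j : ℕ) < i + 1)
          = insert ι (Finset.univ.filter (fun j : Fin N => (j : ℕ) < i)) := by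
        ext j
        simp only [Finset.mem_filter, Finset.mem_univ, true_and, Finset.mem_insert]
        constructor
        · intro h
          rcases Nat.lt_succ_iff_lt_or_eq.1 h with h | h
          · exact Or.inr h
          · exact Or.inl (Fin.ext h)
        · rintro (rfl | h)
          · exact Nat.lt_succ_self i
          · exact Nat.lt_succ_of_lt h
      rw [hset, Finset.sum_insert (by simp [hι])]
    -- commutation of β i with x ι and p ι
    have hterm : ∀ j ∈ Finset.univ.filter (fun j : Fin N => (j : ℕ) < i),
        Commute (x j * p j) (x ι) ∧ Commute (x j * p j) (p ι) := by
      intro j hj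
      have hji : (j : ℕ) < i := by simpa using hj
      have hjι : j < ι := by rw [Fin.lt_def]; exact hji
      have hjne : j ≠ ι := ne_of_lt hjι
      have hιne : ι ≠ j := (ne_of_lt hjι).symm
      constructor
      · show x j * p j * x ι = x ι * (x j * p j)
        rw [mul_assoc, hpx ι j hjne, mul_smul_comm, ← mul_assoc, ← mul_assoc,
          hxx j ι hjι, smul_mul_assoc]
      · show x j * p j * p ι = p ι * (x j * p j)
        have h1 : p ι * p j = q⁻¹ • (p j * p ι) := hpp j ι hjι
        have h2 : p j * p ι = q • (p ι * p j) := by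
          rw [h1, smul_smul, mul_inv_cancel₀ hq0, one_smul]
        have h3 : x j * p ι = q⁻¹ • (p ι * x j) := by
          rw [hpx j ι hιne, smul_smul, inv_mul_cancel₀ hq0, one_smul]
        rw [mul_assoc, h2, mul_smul_comm, ← mul_assoc, h3, smul_mul_assoc, smul_smul,
          mul_inv_cancel₀ hq0, one_smul, mul_assoc]
    have hca : Commute (β i) (x ι) := by
      rw [hβ i]
      exact (Commute.one_left _).add_left
        (Commute.sum_left _ _ _ (fun j hj => (hterm j hj).1))
    have hcb : Commute (β i) (p ι) := by
      rw [hβ i]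
      exact (Commute.one_left _).add_left
        (Commute.sum_left _ _ _ (fun j hj => (hterm j hj).2))
    have hba : p ι * x ι = (q ^ 2) • (x ι * p ι) + (q ^ 2 - 1) • β i := hpxi ι
    have hv : β (i + 1) = β i + x ι * p ι := by
      rw [hβ (i + 1), hβ i, hfilter]
      abel
    have hkey := key_step q l hl hodd hq (x ι) (p ι) (β i) hca hcb hba
    rw [hv, hkey, hIH, hfilter (fun j => x j ^ l * p j ^ l)]
    abel
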